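/- If there exists a time T and at most one index j ∈ [n] such that |E_t| − |N_i(t)| ≥ 1 holds for all t ≥ T and all i ∈ [n] with i ≠ j, then x_i(t) converges as t → ∞ for every i ∈ [n]. -/

import Mathlib

open Finset
open scoped Classical

/-- The threshold graph `G_t`: social neighbors whose garbage differs by at most `ε`. -/
def Gt {n : ℕ} (G : SimpleGraph (Fin n)) (x : ℕ → Fin n → ℝ) (ε : ℝ) (t : ℕ) :
    SimpleGraph (Fin n) where
  Adj i j := G.Adj i j ∧ |x t i - x t j| ≤ ε
  symm := by
    constructor
    intro i j h
    exact ⟨h.1.symm, by rw [abs_sub_comm]; exact h.2⟩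
  loopless := by
    constructor
    intro i h
    exact G.irrefl h.1

/-- `|E_t|`: the number of edges of `G_t`. -/
noncomputable def Ecard {n : ℕ} (G : SimpleGraph (Fin n)) (x : ℕ → Fin n → ℝ) (ε : ℝ)
    (t : ℕ) : ℕ :=
  (Gt G x ε t).edgeSet.ncard

/-- `N_i(t)`: the neighbors of `i` in `G_t`, as a finset. -/
noncomputable def Nb {n : ℕ} (G : SimpleGraph (Fin n)) (x : ℕ → Fin n → ℝ) (ε : ℝ)
    (t : ℕ) (i : Fin n) : Finset (Fin n) :=
  Finset.univ.filter fun j => (Gt G x ε t).Adj i j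

/-- The update rule of the garbage disposal game. -/
def Update {n : ℕ} (G : SimpleGraph (Fin n)) (x : ℕ → Fin n → ℝ) (ε : ℝ) : Prop :=
  ∀ t i,
    x (t + 1) i =
      (if (Gt G x ε t).edgeSet.Nonempty then (1 : ℝ) else 0) / (Ecard G x ε t : ℝ) *
          ∑ j ∈ Nb G x ε t i, x t j +
        (1 - ((Nb G x ε t i).card : ℝ) / (Ecard G x ε t : ℝ) *
            (if (Gt G x ε t).edgeSet.Nonempty then (1 : ℝ) else 0)) * x t i

/-- The Lyapunov functional `Z_t`. -/
noncomputable def Z {n : ℕ} (G : SimpleGraph (Fin n)) (x : ℕ → Fin n → ℝ) (ε : ℝ)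
    (t : ℕ) : ℝ :=
  ∑ i, ∑ j,
    max (min (ε ^ 2) ((x t i - x t j) ^ 2)) (ε ^ 2 * if ¬ G.Adj i j then 1 else 0)

section Helpers
variable {n : ℕ} {G : SimpleGraph (Fin n)} {x : ℕ → Fin n → ℝ} {ε : ℝ}

lemma mem_Nb {t : ℕ} {i k : Fin n} : k ∈ Nb G x ε t i ↔ (Gt G x ε t).Adj i k := by
  simp [Nb]

lemma Nb_empty {t : ℕ} (he : ¬ (Gt G x ε t).edgeSet.Nonempty) (i : Fin n) :
    Nb G x ε t i = ∅ := by
  ext k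
  simp only [mem_Nb, Finset.notMem_empty, iff_false]
  intro hadj
  exact he ⟨s(i,k), (Gt G x ε t).mem_edgeSet.2 hadj⟩

lemma deg_le {t : ℕ} (i : Fin n) : (Nb G x ε t i).card ≤ Ecard G x ε t := by
  rw [Ecard, Set.ncard_eq_toFinset_card _ (Set.toFinite _)]
  refine Finset.card_le_card_of_injOn (fun k => s(i,k)) ?_ ?_
  · intro k hk
    rw [Finset.mem_coe, Set.Finite.mem_toFinset]
    exact (Gt G x ε t).mem_edgeSet.2 (mem_Nb.1 hk)
  · intro a _ b _ hab
    exact Sym2.congr_right.1 hab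

lemma ecard_pos {t : ℕ} (hne : (Gt G x ε t).edgeSet.Nonempty) : 1 ≤ Ecard G x ε t :=
  (Set.ncard_pos (Set.toFinite _)).2 hne

lemma ecard_le {t : ℕ} : Ecard G x ε t ≤ Fintype.card (Sym2 (Fin n)) := by
  rw [Ecard]
  calc (Gt G x ε t).edgeSet.ncard ≤ (Set.univ : Set (Sym2 (Fin n))).ncard :=
        Set.ncard_le_ncard (Set.subset_univ _) (Set.toFinite _)
    _ = _ := by rw [Set.ncard_univ, Nat.card_eq_fintype_card]

lemma swap_sum (t : ℕ) (A : Finset (Fin n)) (F : Fin n → Fin n → ℝ) :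
    ∑ i ∈ A, ∑ k ∈ Nb G x ε t i, F i k = ∑ k, ∑ i ∈ Nb G x ε t k ∩ A, F i k := by
  have h2 : ∀ k : Fin n, Nb G x ε t k ∩ A = A.filter (fun i => (Gt G x ε t).Adj k i) := by
    intro k; ext a; simp [Nb, and_comm]
  calc ∑ i ∈ A, ∑ k ∈ Nb G x ε t i, F i k
      = ∑ i ∈ A, ∑ k, if (Gt G x ε t).Adj i k then F i k else 0 := by
        refine Finset.sum_congr rfl fun i _ => ?_
        rw [Nb, Finset.sum_filter]
    _ = ∑ k, ∑ i ∈ A, if (Gt G x ε t).Adj i k then F i k else 0 := Finset.sum_comm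
    _ = ∑ k, ∑ i ∈ Nb G x ε t k ∩ A, F i k := by
        refine Finset.sum_congr rfl fun k _ => ?_
        rw [h2 k, Finset.sum_filter]
        refine Finset.sum_congr rfl fun i _ => ?_
        simp [(Gt G x ε t).adj_comm]

lemma step_empty (hupd : Update G x ε) {t : ℕ} (he : ¬ (Gt G x ε t).edgeSet.Nonempty)
    (i : Fin n) : x (t+1) i = x t i := by
  rw [hupd t i]; simp [he]

lemma step_nonempty (hupd : Update G x ε) {t : ℕ} (hne : (Gt G x ε t).edgeSet.Nonempty)
    (i : Fin n) :
    x (t+1) i = x t i + (∑ k ∈ Nb G x ε t i, (x t k - x t i)) / (Ecard G x ε t : ℝ) := by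
  have he : (0:ℝ) < (Ecard G x ε t : ℝ) := by exact_mod_cast ecard_pos hne
  rw [hupd t i]
  simp only [hne, if_true]
  rw [Finset.sum_sub_distrib, Finset.sum_const, nsmul_eq_mul]
  field_simp
  ring

lemma abs_le_M (hupd : Update G x ε) : ∀ (t : ℕ) (i : Fin n), |x t i| ≤ ∑ l, |x 0 l| := by
  intro t
  induction t with
  | zero => exact fun i => Finset.single_le_sum (f := fun l => |x 0 l|) (fun l _ => abs_nonneg _) (Finset.mem_univ i)
  | succ t ih =>
    intro i
    set M := ∑ l, |x 0 l| with hM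
    have hM0 : 0 ≤ M := Finset.sum_nonneg fun l _ => abs_nonneg _
    by_cases hne : (Gt G x ε t).edgeSet.Nonempty
    · have he : (0:ℝ) < (Ecard G x ε t : ℝ) := by exact_mod_cast ecard_pos hne
      have hd : ((Nb G x ε t i).card : ℝ) ≤ (Ecard G x ε t : ℝ) := by exact_mod_cast deg_le i
      have hd0 : (0:ℝ) ≤ ((Nb G x ε t i).card : ℝ) := by positivity
      have hco : (0:ℝ) ≤ 1 - ((Nb G x ε t i).card : ℝ) / (Ecard G x ε t : ℝ) := by
        rw [sub_nonneg, div_le_one he]; exact hd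
      rw [hupd t i]
      simp only [hne, if_true]
      calc |1 / (Ecard G x ε t : ℝ) * ∑ j ∈ Nb G x ε t i, x t j +
            (1 - ((Nb G x ε t i).card : ℝ) / (Ecard G x ε t : ℝ) * 1) * x t i|
          ≤ |1 / (Ecard G x ε t : ℝ) * ∑ j ∈ Nb G x ε t i, x t j| +
            |(1 - ((Nb G x ε t i).card : ℝ) / (Ecard G x ε t : ℝ) * 1) * x t i| := abs_add_le _ _
        _ = 1 / (Ecard G x ε t : ℝ) * |∑ j ∈ Nb G x ε t i, x t j| +
            (1 - ((Nb G x ε t i).card : ℝ) / (Ecard G x ε t : ℝ)) * |x t i| := by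
            rw [abs_mul, abs_mul, abs_of_nonneg (by positivity : (0:ℝ) ≤ 1 / (Ecard G x ε t : ℝ)),
              mul_one, abs_of_nonneg hco]
        _ ≤ 1 / (Ecard G x ε t : ℝ) * (((Nb G x ε t i).card : ℝ) * M) +
            (1 - ((Nb G x ε t i).card : ℝ) / (Ecard G x ε t : ℝ)) * M := by
            gcongr
            · calc |∑ j ∈ Nb G x ε t i, x t j| ≤ ∑ j ∈ Nb G x ε t i, |x t j| :=
                    Finset.abs_sum_le_sum_abs _ _
                _ ≤ ∑ j ∈ Nb G x ε t i, M := Finset.sum_le_sum fun j _ => ih j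
                _ = ((Nb G x ε t i).card : ℝ) * M := by rw [Finset.sum_const, nsmul_eq_mul]
            · exact ih i
        _ = M := by field_simp; ring
    · rw [step_empty hupd hne]; exact ih i

end Helpers

noncomputable def Psum {n : ℕ} (G : SimpleGraph (Fin n)) (x : ℕ → Fin n → ℝ) (ε : ℝ)
    (t : ℕ) : ℝ :=
  ∑ i, ∑ k ∈ Nb G x ε t i, (x t k - x t i)^2

noncomputable def Wsum {n : ℕ} (x : ℕ → Fin n → ℝ) (t : ℕ) : ℝ := ∑ i, (x t i)^2

section Descent
variable {n : ℕ} {G : SimpleGraph (Fin n)} {x : ℕ → Fin n → ℝ} {ε : ℝ}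

lemma psum_nonneg (t : ℕ) : 0 ≤ Psum G x ε t :=
  Finset.sum_nonneg fun i _ => Finset.sum_nonneg fun k _ => sq_nonneg _

lemma pi_le_psum (t : ℕ) (i : Fin n) :
    ∑ k ∈ Nb G x ε t i, (x t k - x t i)^2 ≤ Psum G x ε t :=
  Finset.single_le_sum (f := fun i => ∑ k ∈ Nb G x ε t i, (x t k - x t i)^2)
    (fun l _ => Finset.sum_nonneg fun k _ => sq_nonneg _) (Finset.mem_univ i)

/-- the cross-term identity: `∑ᵢ xᵢ·∑_{k∈Nᵢ}(x_k−xᵢ) = −P/2`. -/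
lemma cross_term (t : ℕ) :
    ∑ i, ∑ k ∈ Nb G x ε t i, x t i * (x t k - x t i) = -(Psum G x ε t) / 2 := by
  have hflip : ∑ i, ∑ k ∈ Nb G x ε t i, x t i * (x t k - x t i)
      = ∑ i, ∑ k ∈ Nb G x ε t i, x t k * (x t i - x t k) := by
    have := swap_sum (G := G) (x := x) (ε := ε) t Finset.univ
      (fun i k => x t i * (x t k - x t i))
    simpa [Finset.inter_univ] using this
  have hsum : (∑ i, ∑ k ∈ Nb G x ε t i, x t i * (x t k - x t i))
      + ∑ i, ∑ k ∈ Nb G x ε t i, x t k * (x t i - x t k) = -(Psum G x ε t) := by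
    rw [← Finset.sum_add_distrib]
    rw [Psum, ← Finset.sum_neg_distrib]
    refine Finset.sum_congr rfl fun i _ => ?_
    rw [← Finset.sum_add_distrib, ← Finset.sum_neg_distrib]
    exact Finset.sum_congr rfl fun k _ => by ring
  linarith [hflip, hsum]

lemma descent (hupd : Update G x ε) {j : Fin n} {t : ℕ}
    (hcond : ∀ i : Fin n, i ≠ j → (Nb G x ε t i).card + 1 ≤ Ecard G x ε t) :
    Wsum x (t+1) + Psum G x ε t / (2 * ((Fintype.card (Sym2 (Fin n)) : ℝ) + 1)^2)
      ≤ Wsum x t := by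
  set mR : ℝ := (Fintype.card (Sym2 (Fin n)) : ℝ) + 1 with hmR
  have hmR1 : (1:ℝ) ≤ mR := by
    have : (0:ℝ) ≤ (Fintype.card (Sym2 (Fin n)) : ℝ) := Nat.cast_nonneg _
    rw [hmR]; linarith
  by_cases hne : (Gt G x ε t).edgeSet.Nonempty
  · set e : ℝ := (Ecard G x ε t : ℝ) with hedef
    have he1 : (1:ℝ) ≤ e := by rw [hedef]; exact_mod_cast ecard_pos hne
    have he0 : (0:ℝ) < e := lt_of_lt_of_le one_pos he1
    have hem : e ≤ mR := by
      rw [hmR, hedef]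
      have := ecard_le (G := G) (x := x) (ε := ε) (t := t)
      have : (Ecard G x ε t : ℝ) ≤ (Fintype.card (Sym2 (Fin n)) : ℝ) := by exact_mod_cast this
      linarith
    set P : ℝ := Psum G x ε t with hPdef
    set Pi : Fin n → ℝ := fun i => ∑ k ∈ Nb G x ε t i, (x t k - x t i)^2 with hPidef
    set D : Fin n → ℝ := fun i => (∑ k ∈ Nb G x ε t i, (x t k - x t i)) / e with hDdef
    have hPinn : ∀ i, 0 ≤ Pi i := fun i => Finset.sum_nonneg fun k _ => sq_nonneg _
    have hPsplit : P = ∑ i ∈ Finset.univ.erase j, Pi i + Pi j := by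
      rw [hPdef, Psum, ← Finset.sum_erase_add _ _ (Finset.mem_univ j)]
    -- P_j ≤ sum of others
    have hPj : Pi j ≤ ∑ i ∈ Finset.univ.erase j, Pi i := by
      have hsub : Nb G x ε t j ⊆ Finset.univ.erase j := by
        intro k hk
        exact Finset.mem_erase.2 ⟨(mem_Nb.1 hk).ne', Finset.mem_univ k⟩
      calc Pi j = ∑ k ∈ Nb G x ε t j, (x t k - x t j)^2 := rfl
        _ ≤ ∑ k ∈ Nb G x ε t j, Pi k := by
            refine Finset.sum_le_sum fun k hk => ?_
            have hjk : j ∈ Nb G x ε t k := mem_Nb.2 ((mem_Nb.1 hk).symm)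
            have : (x t j - x t k)^2 ≤ Pi k :=
              Finset.single_le_sum (f := fun l => (x t l - x t k)^2)
                (fun l _ => sq_nonneg _) hjk
            calc (x t k - x t j)^2 = (x t j - x t k)^2 := by ring
              _ ≤ Pi k := this
        _ ≤ ∑ i ∈ Finset.univ.erase j, Pi i :=
            Finset.sum_le_sum_of_subset_of_nonneg hsub (fun i _ _ => hPinn i)
    -- sum of d_i P_i bound
    have hdP : ∑ i, ((Nb G x ε t i).card : ℝ) * Pi i ≤ (e - 1/2) * P := by
      rw [← Finset.sum_erase_add _ _ (Finset.mem_univ j)]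
      have h1 : ∑ i ∈ Finset.univ.erase j, ((Nb G x ε t i).card : ℝ) * Pi i
          ≤ (e - 1) * ∑ i ∈ Finset.univ.erase j, Pi i := by
        rw [Finset.mul_sum]
        refine Finset.sum_le_sum fun i hi => ?_
        have hij : i ≠ j := (Finset.mem_erase.1 hi).1
        have := hcond i hij
        have hd : ((Nb G x ε t i).card : ℝ) ≤ e - 1 := by
          rw [hedef]
          have : ((Nb G x ε t i).card : ℝ) + 1 ≤ (Ecard G x ε t : ℝ) := by exact_mod_cast this
          linarith
        exact mul_le_mul_of_nonneg_right hd (hPinn i)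
      have h2 : ((Nb G x ε t j).card : ℝ) * Pi j ≤ e * Pi j := by
        have : ((Nb G x ε t j).card : ℝ) ≤ e := by
          rw [hedef]; exact_mod_cast deg_le j
        exact mul_le_mul_of_nonneg_right this (hPinn j)
      set Q := ∑ i ∈ Finset.univ.erase j, Pi i with hQ
      have hkey : (e-1) * Q + e * Pi j = (e - 1/2) * (Q + Pi j) + (Pi j - Q)/2 := by ring
      have : P = Q + Pi j := hPsplit
      nlinarith [hPj]
    -- step and W expansion
    have hstep : ∀ i, x (t+1) i = x t i + D i := fun i => step_nonempty hupd hne i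
    have hW : Wsum x (t+1) = Wsum x t + (2 * ∑ i, x t i * D i) + ∑ i, (D i)^2 := by
      rw [Wsum, Wsum]
      rw [Finset.mul_sum, ← Finset.sum_add_distrib, ← Finset.sum_add_distrib]
      refine Finset.sum_congr rfl fun i _ => ?_
      rw [hstep i]; ring
    have hxD : ∑ i, x t i * D i = -(P) / (2*e) := by
      have : ∑ i, x t i * D i = (∑ i, ∑ k ∈ Nb G x ε t i, x t i * (x t k - x t i)) / e := by
        rw [Finset.sum_div]
        refine Finset.sum_congr rfl fun i _ => ?_
        rw [hDdef, ← Finset.mul_sum]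
        ring
      rw [this, cross_term, div_div]
    have hD2 : ∑ i, (D i)^2 ≤ (e - 1/2) * P / e^2 := by
      have h1 : ∀ i, (D i)^2 ≤ ((Nb G x ε t i).card : ℝ) * Pi i / e^2 := by
        intro i
        rw [hDdef, div_pow]
        have hcs := sq_sum_le_card_mul_sum_sq (s := Nb G x ε t i) (f := fun k => x t k - x t i)
        exact (div_le_div_iff_of_pos_right (by positivity)).2 hcs
      calc ∑ i, (D i)^2 ≤ ∑ i, ((Nb G x ε t i).card : ℝ) * Pi i / e^2 :=
            Finset.sum_le_sum fun i _ => h1 i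
        _ = (∑ i, ((Nb G x ε t i).card : ℝ) * Pi i) / e^2 := by rw [Finset.sum_div]
        _ ≤ (e - 1/2) * P / e^2 := (div_le_div_iff_of_pos_right (by positivity)).2 hdP
    have hPnn : (0:ℝ) ≤ P := hPdef ▸ psum_nonneg t
    have h2e : 2 * (-(P)/(2*e)) = -(P)/e := by field_simp
    have hkey2 : -(P)/e + (e - 1/2)*P/e^2 = -(P/(2*e^2)) := by field_simp; ring
    have hfin : Wsum x (t+1) ≤ Wsum x t - P/(2*e^2) := by
      rw [hW, hxD]
      linarith [hD2]
    have hPee : P/(2*mR^2) ≤ P/(2*e^2) := by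
      apply div_le_div_of_nonneg_left hPnn (by positivity)
      nlinarith
    linarith
  · have hPzero : Psum G x ε t = 0 := by
      rw [Psum]
      refine Finset.sum_eq_zero fun i _ => ?_
      rw [Nb_empty hne i, Finset.sum_empty]
    have hWeq : Wsum x (t+1) = Wsum x t :=
      Finset.sum_congr rfl fun i _ => by rw [step_empty hupd hne i]
    rw [hPzero, hWeq, zero_div, add_zero]

lemma delta_sq_le (hupd : Update G x ε) (t : ℕ) (i : Fin n) :
    (x (t+1) i - x t i)^2 ≤ Psum G x ε t := by
  by_cases hne : (Gt G x ε t).edgeSet.Nonempty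
  · have he1 : (1:ℝ) ≤ (Ecard G x ε t : ℝ) := by exact_mod_cast ecard_pos hne
    have he0 : (0:ℝ) < (Ecard G x ε t : ℝ) := lt_of_lt_of_le one_pos he1
    rw [step_nonempty hupd hne i]
    have hcs := sq_sum_le_card_mul_sum_sq (s := Nb G x ε t i) (f := fun k => x t k - x t i)
    have hd : ((Nb G x ε t i).card : ℝ) ≤ (Ecard G x ε t : ℝ) := by exact_mod_cast deg_le i
    have hPi := pi_le_psum (G := G) (x := x) (ε := ε) t i
    have hPin : (0:ℝ) ≤ ∑ k ∈ Nb G x ε t i, (x t k - x t i)^2 :=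
      Finset.sum_nonneg fun k _ => sq_nonneg _
    have h1 : (∑ k ∈ Nb G x ε t i, (x t k - x t i))^2
        ≤ (Ecard G x ε t : ℝ) * Psum G x ε t := by
      calc (∑ k ∈ Nb G x ε t i, (x t k - x t i))^2
          ≤ ((Nb G x ε t i).card : ℝ) * ∑ k ∈ Nb G x ε t i, (x t k - x t i)^2 := hcs
        _ ≤ (Ecard G x ε t : ℝ) * Psum G x ε t :=
          mul_le_mul hd hPi hPin (le_of_lt he0)
    have h2 : (x t i + (∑ k ∈ Nb G x ε t i, (x t k - x t i)) / (Ecard G x ε t : ℝ) - x t i)^2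
        = (∑ k ∈ Nb G x ε t i, (x t k - x t i))^2 / (Ecard G x ε t : ℝ)^2 := by
      rw [add_sub_cancel_left, div_pow]
    rw [h2]
    calc (∑ k ∈ Nb G x ε t i, (x t k - x t i))^2 / (Ecard G x ε t : ℝ)^2
        ≤ ((Ecard G x ε t : ℝ) * Psum G x ε t) / (Ecard G x ε t : ℝ)^2 :=
          (div_le_div_iff_of_pos_right (by positivity)).2 h1
      _ = Psum G x ε t / (Ecard G x ε t : ℝ) := by field_simp
      _ ≤ Psum G x ε t := div_le_self (psum_nonneg t) he1
  · rw [step_empty hupd hne i]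
    simpa using psum_nonneg (G := G) (x := x) (ε := ε) t

end Descent

/-- minimum over `k`-subsets of the coordinate sum. -/
noncomputable def Smin {n : ℕ} (x : ℕ → Fin n → ℝ) (k t : ℕ) : ℝ :=
  if hk : k ≤ n then
    (Finset.powersetCard k (Finset.univ : Finset (Fin n))).inf'
      (by rw [Finset.powersetCard_nonempty]; simpa using hk)
      (fun A => ∑ i ∈ A, x t i)
  else 0

section Smin
variable {n : ℕ} {G : SimpleGraph (Fin n)} {x : ℕ → Fin n → ℝ} {ε : ℝ}

lemma smin_le {k : ℕ} (hk : k ≤ n) {A : Finset (Fin n)} (hA : A.card = k) (t : ℕ) :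
    Smin x k t ≤ ∑ i ∈ A, x t i := by
  rw [Smin, dif_pos hk]
  exact Finset.inf'_le _ (by rw [Finset.mem_powersetCard]; exact ⟨Finset.subset_univ _, hA⟩)

lemma smin_exists {k : ℕ} (hk : k ≤ n) (t : ℕ) :
    ∃ A : Finset (Fin n), A.card = k ∧ Smin x k t = ∑ i ∈ A, x t i := by
  rw [Smin, dif_pos hk]
  obtain ⟨A, hAmem, hAeq⟩ := Finset.exists_mem_eq_inf'
    (by rw [Finset.powersetCard_nonempty]; simpa using hk : 
      (Finset.powersetCard k (Finset.univ : Finset (Fin n))).Nonempty)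
    (fun A => ∑ i ∈ A, x t i)
  exact ⟨A, (Finset.mem_powersetCard.1 hAmem).2, hAeq⟩

/-- the L.P. lemma: a fractional selection of total mass `k` dominates the minimum
`k`-subset sum. -/
lemma lp_lemma {k : ℕ} (hk : k ≤ n) (t : ℕ) (c : Fin n → ℝ)
    (hc0 : ∀ l, 0 ≤ c l) (hc1 : ∀ l, c l ≤ 1) (hsum : ∑ l, c l = (k : ℝ)) :
    Smin x k t ≤ ∑ l, c l * x t l := by
  obtain ⟨B, hBcard, hBeq⟩ := smin_exists (x := x) hk t
  rw [hBeq]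
  rcases Nat.eq_zero_or_pos k with hk0 | hkpos
  · subst hk0
    have hc : ∀ l ∈ Finset.univ, c l = 0 := by
      intro l hl
      have := (Finset.sum_eq_zero_iff_of_nonneg (fun l _ => hc0 l)).1 (by simpa using hsum)
      exact this l hl
    have hB : B = ∅ := Finset.card_eq_zero.1 hBcard
    rw [hB, Finset.sum_empty]
    rw [Finset.sum_congr rfl (fun l hl => by rw [hc l hl, zero_mul])]
    simp
  · have hBne : B.Nonempty := Finset.card_pos.1 (hBcard ▸ hkpos)
    set θ := B.sup' hBne (x t) with hθ
    have hθub : ∀ b ∈ B, x t b ≤ θ := fun b hb => Finset.le_sup' _ hb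
    obtain ⟨b₀, hb₀B, hb₀⟩ := Finset.exists_mem_eq_sup' hBne (x t)
    have hθlb : ∀ a, a ∉ B → θ ≤ x t a := by
      intro a ha
      have hane : a ∉ B.erase b₀ := fun hmem => ha (Finset.mem_of_mem_erase hmem)
      have hcard : (insert a (B.erase b₀)).card = k := by
        rw [Finset.card_insert_of_notMem hane, Finset.card_erase_of_mem hb₀B, hBcard]
        omega
      have hmin : ∑ i ∈ B, x t i ≤ ∑ i ∈ insert a (B.erase b₀), x t i := by
        rw [← hBeq]; exact smin_le hk hcard t
      rw [Finset.sum_insert hane] at hmin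
      have herase : ∑ i ∈ B.erase b₀, x t i = ∑ i ∈ B, x t i - x t b₀ := by
        rw [← Finset.sum_erase_add B _ hb₀B]; ring
      rw [herase] at hmin
      rw [hθ, hb₀]
      linarith
    -- main computation
    have hsplit : ∑ l, c l * x t l = ∑ l ∈ B, c l * x t l + ∑ l ∈ Bᶜ, c l * x t l :=
      (Finset.sum_add_sum_compl B _).symm
    have hcB : ∑ l ∈ B, c l + ∑ l ∈ Bᶜ, c l = (k:ℝ) := by
      rw [Finset.sum_add_sum_compl B c]; exact hsum
    have h1 : ∑ l ∈ B, (c l - 1) * x t l ≥ ∑ l ∈ B, (c l - 1) * θ := by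
      refine Finset.sum_le_sum fun l hl => ?_
      have : c l - 1 ≤ 0 := by linarith [hc1 l]
      nlinarith [hθub l hl]
    have h2 : ∑ l ∈ Bᶜ, c l * x t l ≥ ∑ l ∈ Bᶜ, c l * θ := by
      refine Finset.sum_le_sum fun l hl => ?_
      have hl' : l ∉ B := Finset.mem_compl.1 hl
      nlinarith [hθlb l hl', hc0 l]
    have hBsum : ∑ l ∈ B, (c l - 1) * x t l = ∑ l ∈ B, c l * x t l - ∑ l ∈ B, x t l := by
      rw [eq_sub_iff_add_eq, ← Finset.sum_add_distrib]
      exact Finset.sum_congr rfl fun l _ => by ring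
    have e1 : ∑ l ∈ B, (c l - 1) * θ + ∑ l ∈ Bᶜ, c l * θ = 0 := by
      rw [← Finset.sum_mul, ← Finset.sum_mul, ← add_mul]
      have hz : (∑ l ∈ B, (c l - 1)) + ∑ l ∈ Bᶜ, c l = 0 := by
        rw [Finset.sum_sub_distrib, Finset.sum_const, nsmul_eq_mul, mul_one, hBcard]
        linarith [hcB]
      rw [hz, zero_mul]
    linarith [h1, h2, e1, hsplit, hBsum]

lemma smin_mono (hupd : Update G x ε) {k : ℕ} (hk : k ≤ n) (t : ℕ) :
    Smin x k t ≤ Smin x k (t+1) := by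
  by_cases hne : (Gt G x ε t).edgeSet.Nonempty
  · obtain ⟨A, hAcard, hAeq⟩ := smin_exists (x := x) hk (t+1)
    rw [hAeq]
    set e : ℝ := (Ecard G x ε t : ℝ) with hedef
    have he1 : (1:ℝ) ≤ e := by rw [hedef]; exact_mod_cast ecard_pos hne
    have he0 : (0:ℝ) < e := lt_of_lt_of_le one_pos he1
    set c : Fin n → ℝ := fun l => (if l ∈ A then (1:ℝ) else 0) +
      (((Nb G x ε t l ∩ A).card : ℝ) - (if l ∈ A then ((Nb G x ε t l).card : ℝ) else 0)) / e
      with hcdef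
    have hcard_le : ∀ l, ((Nb G x ε t l ∩ A).card : ℝ) ≤ ((Nb G x ε t l).card : ℝ) := by
      intro l; exact_mod_cast Finset.card_le_card Finset.inter_subset_left
    have hcard_nn : ∀ l, (0:ℝ) ≤ ((Nb G x ε t l ∩ A).card : ℝ) := fun l => Nat.cast_nonneg _
    have hdeg_le : ∀ l, ((Nb G x ε t l).card : ℝ) ≤ e := by
      intro l; rw [hedef]; exact_mod_cast deg_le l
    have hc0 : ∀ l, 0 ≤ c l := by
      intro l
      rw [hcdef]
      by_cases hl : l ∈ A <;> simp only [hl, if_true, if_false]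
      · have h1 : ((Nb G x ε t l).card : ℝ) - ((Nb G x ε t l ∩ A).card : ℝ) ≤ e :=
          le_trans (by linarith [hcard_nn l]) (hdeg_le l)
        have h2 : (((Nb G x ε t l).card : ℝ) - ((Nb G x ε t l ∩ A).card : ℝ)) / e ≤ 1 :=
          (div_le_one he0).2 h1
        have h3 : (((Nb G x ε t l ∩ A).card : ℝ) - ((Nb G x ε t l).card : ℝ)) / e
            = -((((Nb G x ε t l).card : ℝ) - ((Nb G x ε t l ∩ A).card : ℝ)) / e) := by ring
        rw [h3]
        linarith
      · simp only [sub_zero, zero_add]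
        positivity
    have hc1 : ∀ l, c l ≤ 1 := by
      intro l
      rw [hcdef]
      by_cases hl : l ∈ A <;> simp only [hl, if_true, if_false]
      · have : (((Nb G x ε t l ∩ A).card : ℝ) - ((Nb G x ε t l).card : ℝ)) / e ≤ 0 :=
          div_nonpos_of_nonpos_of_nonneg (by linarith [hcard_le l]) (le_of_lt he0)
        linarith
      · have : ((Nb G x ε t l ∩ A).card : ℝ) / e ≤ 1 :=
          (div_le_one he0).2 (le_trans (hcard_le l) (hdeg_le l))
        simp only [sub_zero, zero_add]
        linarith
    have hswap1 : ∑ l, ((Nb G x ε t l ∩ A).card : ℝ) = ∑ i ∈ A, ((Nb G x ε t i).card : ℝ) := by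
      have hss := swap_sum (G := G) (x := x) (ε := ε) t A (fun _ _ => (1:ℝ))
      simp only [Finset.sum_const, nsmul_eq_mul, mul_one] at hss
      exact hss.symm
    have hsumc : ∑ l, c l = (k:ℝ) := by
      rw [hcdef]
      rw [Finset.sum_add_distrib]
      have h1 : ∑ l, (if l ∈ A then (1:ℝ) else 0) = (k:ℝ) := by
        rw [Finset.sum_ite_mem, Finset.univ_inter, Finset.sum_const, nsmul_eq_mul, mul_one,
          hAcard]
      have h2 : ∑ l, (((Nb G x ε t l ∩ A).card : ℝ)
          - (if l ∈ A then ((Nb G x ε t l).card : ℝ) else 0)) / e = 0 := by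
        rw [← Finset.sum_div]
        have hz : ∑ l, (((Nb G x ε t l ∩ A).card : ℝ)
            - (if l ∈ A then ((Nb G x ε t l).card : ℝ) else 0)) = 0 := by
          rw [Finset.sum_sub_distrib, hswap1, Finset.sum_ite_mem, Finset.univ_inter]
          ring
        rw [hz, zero_div]
      rw [h1, h2, add_zero]
    have hrepr : ∑ i ∈ A, x (t+1) i = ∑ l, c l * x t l := by
      have hstep : ∀ i, x (t+1) i = x t i + (∑ kk ∈ Nb G x ε t i, (x t kk - x t i)) / e :=
        fun i => step_nonempty hupd hne i
      have hsw : ∑ i ∈ A, ∑ kk ∈ Nb G x ε t i, x t kk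
          = ∑ l, ((Nb G x ε t l ∩ A).card : ℝ) * x t l := by
        rw [swap_sum (G := G) (x := x) (ε := ε) t A (fun i kk => x t kk)]
        exact Finset.sum_congr rfl fun l _ => by rw [Finset.sum_const, nsmul_eq_mul]
      calc ∑ i ∈ A, x (t+1) i
          = ∑ i ∈ A, (x t i + (∑ kk ∈ Nb G x ε t i, (x t kk - x t i)) / e) :=
            Finset.sum_congr rfl fun i _ => hstep i
        _ = ∑ i ∈ A, x t i + (∑ i ∈ A, ∑ kk ∈ Nb G x ε t i, (x t kk - x t i)) / e := by
            rw [Finset.sum_add_distrib, Finset.sum_div]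
        _ = ∑ i ∈ A, x t i + ((∑ l, ((Nb G x ε t l ∩ A).card : ℝ) * x t l)
              - ∑ i ∈ A, ((Nb G x ε t i).card : ℝ) * x t i) / e := by
            congr 2
            have hin : ∀ i, ∑ kk ∈ Nb G x ε t i, (x t kk - x t i)
                = (∑ kk ∈ Nb G x ε t i, x t kk) - ((Nb G x ε t i).card : ℝ) * x t i := by
              intro i; rw [Finset.sum_sub_distrib, Finset.sum_const, nsmul_eq_mul]
            rw [Finset.sum_congr rfl fun i _ => hin i, Finset.sum_sub_distrib, hsw]
        _ = ∑ l, c l * x t l := by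
            rw [hcdef]
            have hexp : ∀ l, ((if l ∈ A then (1:ℝ) else 0) +
                (((Nb G x ε t l ∩ A).card : ℝ)
                  - (if l ∈ A then ((Nb G x ε t l).card : ℝ) else 0)) / e) * x t l
              = (if l ∈ A then x t l else 0)
                + (((Nb G x ε t l ∩ A).card : ℝ) * x t l
                   - (if l ∈ A then ((Nb G x ε t l).card : ℝ) * x t l else 0)) / e := by
              intro l; by_cases hl : l ∈ A <;> simp only [hl, if_true, if_false] <;> ring
            rw [Finset.sum_congr rfl fun l _ => hexp l]
            rw [Finset.sum_add_distrib, Finset.sum_ite_mem, Finset.univ_inter]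
            congr 1
            rw [← Finset.sum_div, Finset.sum_sub_distrib, Finset.sum_ite_mem, Finset.univ_inter]
    calc Smin x k t ≤ ∑ l, c l * x t l := lp_lemma hk t c hc0 hc1 hsumc
      _ = ∑ i ∈ A, x (t+1) i := hrepr.symm
  · have hxeq : ∀ i, x (t+1) i = x t i := fun i => step_empty hupd hne i
    have heq : Smin x k (t+1) = Smin x k t := by
      rw [Smin, Smin, dif_pos hk, dif_pos hk]
      exact Finset.inf'_congr _ rfl (fun A _ => Finset.sum_congr rfl fun i _ => hxeq i)
    rw [heq]

lemma smin_bdd (hupd : Update G x ε) {k : ℕ} (hk : k ≤ n) (t : ℕ) :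
    Smin x k t ≤ (n:ℝ) * ∑ l, |x 0 l| := by
  obtain ⟨A, hAcard, hAeq⟩ := smin_exists (x := x) hk t
  rw [hAeq]
  have hM0 : 0 ≤ ∑ l, |x 0 l| := Finset.sum_nonneg fun l _ => abs_nonneg _
  calc ∑ i ∈ A, x t i ≤ ∑ i ∈ A, ∑ l, |x 0 l| :=
        Finset.sum_le_sum fun i _ => le_trans (le_abs_self _) (abs_le_M hupd t i)
    _ = (A.card : ℝ) * ∑ l, |x 0 l| := by rw [Finset.sum_const, nsmul_eq_mul]
    _ ≤ (n:ℝ) * ∑ l, |x 0 l| := by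
        have : (A.card : ℝ) ≤ (n:ℝ) := by exact_mod_cast hAcard ▸ hk
        exact mul_le_mul_of_nonneg_right this hM0

lemma fin_le_strictMono {k m : ℕ} (g : Fin k → Fin m) (hg : StrictMono g) :
    ∀ l : Fin k, (l : ℕ) ≤ (g l : ℕ) := by
  have key : ∀ p : ℕ, ∀ hp : p < k, p ≤ (g ⟨p, hp⟩ : ℕ) := by
    intro p
    induction p with
    | zero => intro hp; exact Nat.zero_le _
    | succ q ih =>
      intro hp
      have hq : q < k := Nat.lt_of_succ_lt hp
      have h1 := ih hq
      have h2 : g ⟨q, hq⟩ < g ⟨q+1, hp⟩ := hg (Fin.mk_lt_mk.2 (Nat.lt_succ_self q))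
      rw [Fin.lt_def] at h2
      omega
  intro l
  have := key l.val l.isLt
  simpa using this

lemma smin_sorted (t : ℕ) {k : ℕ} (hk : k ≤ n) :
    Smin x k t = ∑ l : Fin k, x t (Tuple.sort (x t) (Fin.castLE hk l)) := by
  set σ := Tuple.sort (x t) with hσ
  have hmono : Monotone (x t ∘ ⇑σ) := Tuple.monotone_sort (x t)
  apply le_antisymm
  · set A : Finset (Fin n) :=
      (Finset.univ : Finset (Fin k)).image (fun l => σ (Fin.castLE hk l)) with hA
    have hinj : Function.Injective (fun l : Fin k => σ (Fin.castLE hk l)) := by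
      intro a b hab
      exact Fin.castLE_injective hk (σ.injective hab)
    have hcard : A.card = k := by
      rw [hA, Finset.card_image_of_injective _ hinj, Finset.card_univ, Fintype.card_fin]
    have hsum : ∑ i ∈ A, x t i = ∑ l : Fin k, x t (σ (Fin.castLE hk l)) := by
      rw [hA, Finset.sum_image (fun a _ b _ h => hinj h)]
    calc Smin x k t ≤ ∑ i ∈ A, x t i := smin_le hk hcard t
      _ = _ := hsum
  · rw [Smin, dif_pos hk]
    apply Finset.le_inf'
    intro A hAmem
    have hAcard : A.card = k := (Finset.mem_powersetCard.1 hAmem).2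
    set A' : Finset (Fin n) := A.image (⇑σ.symm) with hA'
    have hA'card : A'.card = k := by
      rw [hA', Finset.card_image_of_injective _ σ.symm.injective, hAcard]
    have hsum1 : ∑ i ∈ A, x t i = ∑ b ∈ A', x t (σ b) := by
      rw [hA', Finset.sum_image (fun a _ b _ h => σ.symm.injective h)]
      exact Finset.sum_congr rfl fun a _ => by rw [Equiv.apply_symm_apply]
    set ι := A'.orderIsoOfFin hA'card with hι
    have hsum2 : ∑ b ∈ A', x t (σ b) = ∑ l : Fin k, x t (σ ((ι l : {y // y ∈ A'}) : Fin n)) := by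
      rw [← Finset.sum_coe_sort A' (fun b => x t (σ b))]
      exact (Equiv.sum_comp ι.toEquiv (fun b : {y // y ∈ A'} => x t (σ (b : Fin n)))).symm
    have hterm : ∀ l : Fin k,
        x t (σ (Fin.castLE hk l)) ≤ x t (σ ((ι l : {y // y ∈ A'}) : Fin n)) := by
      intro l
      have hsm : StrictMono (fun l : Fin k => ((ι l : {y // y ∈ A'}) : Fin n)) := by
        intro a b hab
        exact Subtype.coe_lt_coe.2 (ι.strictMono hab)
      have hle := fin_le_strictMono _ hsm l
      exact hmono (by rw [Fin.le_def]; simpa using hle)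
    calc ∑ l : Fin k, x t (σ (Fin.castLE hk l))
        ≤ ∑ l : Fin k, x t (σ ((ι l : {y // y ∈ A'}) : Fin n)) :=
          Finset.sum_le_sum fun l _ => hterm l
      _ = ∑ b ∈ A', x t (σ b) := hsum2.symm
      _ = ∑ i ∈ A, x t i := hsum1.symm

lemma exists_rank (t : ℕ) (i : Fin n) :
    ∃ k : ℕ, k < n ∧ x t i = Smin x (k+1) t - Smin x k t := by
  set σ := Tuple.sort (x t) with hσ
  set l : Fin n := σ.symm i with hl
  refine ⟨l.val, l.isLt, ?_⟩
  have hk1 : l.val + 1 ≤ n := l.isLt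
  have hkk : l.val ≤ n := le_of_lt l.isLt
  rw [smin_sorted (x := x) t hk1, smin_sorted (x := x) t hkk]
  rw [Fin.sum_univ_castSucc (f := fun m : Fin (l.val+1) => x t (σ (Fin.castLE hk1 m)))]
  have h1 : ∀ m : Fin l.val, Fin.castLE hk1 m.castSucc = Fin.castLE hkk m := by
    intro m; ext; simp
  have h2 : Fin.castLE hk1 (Fin.last l.val) = l := by ext; simp
  rw [h2, Finset.sum_congr rfl fun m _ => by rw [h1 m], add_sub_cancel_left, hl,
    Equiv.apply_symm_apply]

end Smin


/-- Lemma 5: all `x_i(t)` converge if at most one index fails `|E_t| − |N_i(t)| ≥ 1`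
after some time. -/
theorem asymptotic_stability_all {n : ℕ} (G : SimpleGraph (Fin n)) (x : ℕ → Fin n → ℝ)
    (ε : ℝ) (hε : 0 < ε) (hx0 : ∀ i, 0 ≤ x 0 i) (hupd : Update G x ε)
    (h : ∃ T : ℕ, ∃ j : Fin n, ∀ t, T ≤ t → ∀ i : Fin n, i ≠ j →
      (Nb G x ε t i).card + 1 ≤ Ecard G x ε t) :
    ∀ i : Fin n, ∃ L : ℝ, Filter.Tendsto (fun t => x t i) Filter.atTop (nhds L) := by
  classical
  obtain ⟨T, j, hcond⟩ := h
  intro i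
  set C : ℝ := 2 * ((Fintype.card (Sym2 (Fin n)) : ℝ) + 1)^2 with hC
  have hC0 : 0 < C := by positivity
  have hPnn : ∀ t, 0 ≤ Psum G x ε t := fun t => psum_nonneg t
  have hW0 : ∀ t, (0:ℝ) ≤ Wsum x t := fun t => Finset.sum_nonneg fun l _ => sq_nonneg _
  have hdesc : ∀ t, T ≤ t → Wsum x (t+1) + Psum G x ε t / C ≤ Wsum x t := by
    intro t ht
    exact descent hupd (hcond t ht)
  have hanti : Antitone (fun s => Wsum x (T+s)) := by
    apply antitone_nat_of_succ_le
    intro s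
    have h1 := hdesc (T+s) (Nat.le_add_right _ _)
    have h2 : 0 ≤ Psum G x ε (T+s) / C := div_nonneg (hPnn _) (le_of_lt hC0)
    have h3 : T + (s+1) = (T+s) + 1 := rfl
    rw [h3]
    linarith
  have hbb : BddBelow (Set.range fun s => Wsum x (T+s)) :=
    ⟨0, by rintro y ⟨s, rfl⟩; exact hW0 _⟩
  have hWconv := tendsto_atTop_ciInf hanti hbb
  have hWconv1 : Filter.Tendsto (fun s => Wsum x (T+(s+1))) Filter.atTop
      (nhds (⨅ s, Wsum x (T+s))) := hWconv.comp (Filter.tendsto_add_atTop_nat 1)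
  have hdiff : Filter.Tendsto (fun s => Wsum x (T+s) - Wsum x (T+(s+1))) Filter.atTop
      (nhds 0) := by
    have := hWconv.sub hWconv1
    simpa using this
  have hPT : Filter.Tendsto (fun s => Psum G x ε (T+s)) Filter.atTop (nhds 0) := by
    apply squeeze_zero (fun s => hPnn _)
      (g := fun s => (Wsum x (T+s) - Wsum x (T+(s+1))) * C)
    · intro s
      have h1 := hdesc (T+s) (Nat.le_add_right _ _)
      have h3 : Psum G x ε (T+s) / C ≤ Wsum x (T+s) - Wsum x (T+(s+1)) := by
        have : T + (s+1) = (T+s) + 1 := rfl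
        rw [this]
        linarith
      rw [div_le_iff₀ hC0] at h3
      exact h3
    · have := hdiff.mul_const C
      simpa using this
  have hP : Filter.Tendsto (Psum G x ε) Filter.atTop (nhds 0) := by
    rw [← Filter.tendsto_add_atTop_iff_nat T]
    have : (fun t => Psum G x ε (t + T)) = fun s => Psum G x ε (T + s) := by
      funext s; rw [Nat.add_comm]
    rw [this]
    exact hPT
  have hDel : Filter.Tendsto (fun t => |x (t+1) i - x t i|) Filter.atTop (nhds 0) := by
    have hsq : ∀ t, |x (t+1) i - x t i| ≤ Real.sqrt (Psum G x ε t) := by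
      intro t
      rw [← Real.sqrt_sq_eq_abs]
      exact Real.sqrt_le_sqrt (delta_sq_le hupd t i)
    have hsqrt : Filter.Tendsto (fun t => Real.sqrt (Psum G x ε t)) Filter.atTop (nhds 0) := by
      have := (Real.continuous_sqrt.tendsto 0).comp hP
      simpa [Function.comp_def] using this
    exact squeeze_zero (fun t => abs_nonneg _) hsq hsqrt
  -- Smin convergence
  have hSmono : ∀ k, k ≤ n → Monotone (fun t => Smin x k t) := fun k hk =>
    monotone_nat_of_le_succ (fun t => smin_mono hupd hk t)
  have hSbdd : ∀ k, k ≤ n → BddAbove (Set.range fun t => Smin x k t) := fun k hk =>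
    ⟨(n:ℝ) * ∑ l, |x 0 l|, by rintro y ⟨t, rfl⟩; exact smin_bdd hupd hk t⟩
  set σf : ℕ → ℝ := fun k => ⨆ t, Smin x k t with hσf
  have hSconv : ∀ k, k ≤ n → Filter.Tendsto (fun t => Smin x k t) Filter.atTop (nhds (σf k)) :=
    fun k hk => tendsto_atTop_ciSup (hSmono k hk) (hSbdd k hk)
  -- limit set and minimal gap
  set Lset : Finset ℝ := (Finset.range n).image (fun k => σf (k+1) - σf k) with hLset
  set gapF : Finset ℝ := insert 1 (((Lset ×ˢ Lset).filter (fun p => p.1 ≠ p.2)).image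
    (fun p => |p.1 - p.2|)) with hgapF
  have hgne : gapF.Nonempty := ⟨1, Finset.mem_insert_self _ _⟩
  set g : ℝ := gapF.min' hgne with hgdef
  have hg0 : 0 < g := by
    have hmem : g ∈ gapF := gapF.min'_mem hgne
    rw [hgapF] at hmem
    rcases Finset.mem_insert.1 hmem with h1 | h1
    · rw [h1]; norm_num
    · obtain ⟨p, hp, hpe⟩ := Finset.mem_image.1 h1
      have hne := (Finset.mem_filter.1 hp).2
      rw [← hpe]
      exact abs_pos.2 (sub_ne_zero.2 hne)
  have hgle : ∀ a ∈ Lset, ∀ b ∈ Lset, a ≠ b → g ≤ |a - b| := by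
    intro a ha b hb hab
    apply Finset.min'_le
    exact Finset.mem_insert_of_mem (Finset.mem_image.2
      ⟨(a,b), Finset.mem_filter.2 ⟨Finset.mem_product.2 ⟨ha, hb⟩, hab⟩, rfl⟩)
  -- Cauchy sequence
  apply cauchySeq_tendsto_of_complete
  rw [Metric.cauchySeq_iff']
  intro ε₀ hε₀
  set η : ℝ := min (ε₀/3) (g/4) with hη
  have hη0 : 0 < η := lt_min (by linarith) (by linarith)
  have hηε : η ≤ ε₀/3 := min_le_left _ _
  have hηg : η ≤ g/4 := min_le_right _ _
  have hev1 : ∀ᶠ t in Filter.atTop, ∀ k ∈ Finset.range (n+1), |Smin x k t - σf k| ≤ η/2 := by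
    rw [Finset.eventually_all]
    intro k hk
    have hkn : k ≤ n := Nat.lt_succ_iff.1 (Finset.mem_range.1 hk)
    have h2 : ∀ᶠ t in Filter.atTop, Smin x k t ∈ Metric.ball (σf k) (η/2) :=
      (hSconv k hkn) (Metric.ball_mem_nhds _ (by linarith))
    filter_upwards [h2] with t ht
    rw [Metric.mem_ball, Real.dist_eq] at ht
    linarith
  have hev2 : ∀ᶠ t in Filter.atTop, |x (t+1) i - x t i| ≤ η := by
    filter_upwards [hDel.eventually_lt_const hη0] with t ht
    linarith
  obtain ⟨N₁, hN₁⟩ := Filter.eventually_atTop.1 hev1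
  obtain ⟨N₂, hN₂⟩ := Filter.eventually_atTop.1 hev2
  refine ⟨max N₁ N₂, ?_⟩
  set N := max N₁ N₂ with hN
  have hclose : ∀ t, N ≤ t → ∃ c ∈ Lset, |x t i - c| ≤ η := by
    intro t ht
    obtain ⟨k, hkn, hrank⟩ := exists_rank (x := x) t i
    refine ⟨σf (k+1) - σf k, Finset.mem_image.2 ⟨k, Finset.mem_range.2 hkn, rfl⟩, ?_⟩
    have e1 := hN₁ t (le_trans (le_max_left _ _) ht) (k+1) (Finset.mem_range.2 (by omega))
    have e2 := hN₁ t (le_trans (le_max_left _ _) ht) k (Finset.mem_range.2 (by omega))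
    rw [hrank]
    have hre : Smin x (k+1) t - Smin x k t - (σf (k+1) - σf k)
        = (Smin x (k+1) t - σf (k+1)) - (Smin x k t - σf k) := by ring
    rw [hre]
    calc |(Smin x (k+1) t - σf (k+1)) - (Smin x k t - σf k)|
        ≤ |Smin x (k+1) t - σf (k+1)| + |Smin x k t - σf k| := abs_sub _ _
      _ ≤ η/2 + η/2 := add_le_add e1 e2
      _ = η := by ring
  obtain ⟨c₀, hc₀mem, hc₀N⟩ := hclose N le_rfl
  have htrap : ∀ t, N ≤ t → |x t i - c₀| ≤ η := by
    intro t ht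
    induction t, ht using Nat.le_induction with
    | base => exact hc₀N
    | succ t ht ih =>
      obtain ⟨c, hcmem, hct⟩ := hclose (t+1) (by omega)
      have hstep := hN₂ t (le_trans (le_max_right _ _) ht)
      have b1 := abs_le.1 hct
      have b2 := abs_le.1 hstep
      have b3 := abs_le.1 ih
      have hcc : |c - c₀| ≤ 3*η := abs_le.2 ⟨by linarith, by linarith⟩
      have hceq : c = c₀ := by
        by_contra hne2
        have := hgle c hcmem c₀ hc₀mem hne2
        linarith
      rw [← hceq]
      exact hct
  intro t ht
  rw [Real.dist_eq]
  have b1 := abs_le.1 (htrap t ht)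
  have b2 := abs_le.1 (htrap N le_rfl)
  exact abs_lt.2 ⟨by linarith, by linarith⟩
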